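/- Purity lemma: Let F be a number field with embeddings Σ_F = Hom(F,ℂ), and suppose integers (n_τ)_{τ∈Σ_F} satisfy ∏_{τ∈Σ_F} τ(u)^{n_τ} = 1 for all units u in a finite-index subgroup U of the unit group U_F. Then there exists an integer w such that: (i) if F has a real embedding, then n_τ = w for all τ; (ii) if F is totally imaginary, then n_{γ∘τ} + n_{γ∘τ̄} = w for all τ ∈ Σ_F and all γ ∈ Gal(ℚ̄/ℚ). -/

import Mathlib

open NumberField

open scoped Classical

namespace PurityAux

open NumberField.InfinitePlace Finset

variable {F : Type*} [Field F] [NumberField F]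

/-- The coefficient attached to an infinite place: the sum of the exponents over
the embeddings inducing that place. -/
noncomputable def cc (n : (F →+* ℂ) → ℤ) (w : InfinitePlace F) : ℤ :=
  ∑ φ ∈ Finset.univ.filter (fun φ : F →+* ℂ => InfinitePlace.mk φ = w), n φ

lemma sum_cc (n : (F →+* ℂ) → ℤ) :
    ∑ w : InfinitePlace F, cc n w = ∑ τ : F →+* ℂ, n τ := by
  simpa [cc] using Finset.sum_fiberwise Finset.univ (fun φ : F →+* ℂ => InfinitePlace.mk φ) n

lemma fiber_eq_of_isReal {φ : F →+* ℂ} (hφ : ComplexEmbedding.IsReal φ) :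
    Finset.univ.filter
      (fun ψ : F →+* ℂ => InfinitePlace.mk ψ = InfinitePlace.mk φ) = {φ} := by
  ext ψ
  simp only [Finset.mem_filter, Finset.mem_univ, true_and, Finset.mem_singleton, mk_eq_iff]
  constructor
  · rintro (rfl | hc)
    · rfl
    · have h2 : ψ = ComplexEmbedding.conjugate φ := by
        rw [← hc]; exact (star_star ψ).symm
      rwa [ComplexEmbedding.isReal_iff.mp hφ] at h2
  · rintro rfl; exact Or.inl rfl

lemma cc_of_isReal (n : (F →+* ℂ) → ℤ) {φ : F →+* ℂ} (hφ : ComplexEmbedding.IsReal φ) :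
    cc n (InfinitePlace.mk φ) = n φ := by
  rw [cc, fiber_eq_of_isReal hφ, Finset.sum_singleton]

lemma fiber_eq_of_not_isReal {φ : F →+* ℂ} (hφ : ¬ ComplexEmbedding.IsReal φ) :
    Finset.univ.filter
      (fun ψ : F →+* ℂ => InfinitePlace.mk ψ = InfinitePlace.mk φ) =
        {φ, ComplexEmbedding.conjugate φ} := by
  ext ψ
  simp only [Finset.mem_filter, Finset.mem_univ, true_and, Finset.mem_insert,
    Finset.mem_singleton, mk_eq_iff]
  constructor
  · rintro (rfl | hc)
    · exact Or.inl rfl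
    · right
      rw [← hc]; exact (star_star ψ).symm
  · rintro (rfl | rfl)
    · exact Or.inl rfl
    · exact Or.inr (star_star φ)

lemma cc_of_not_isReal (n : (F →+* ℂ) → ℤ) {φ : F →+* ℂ}
    (hφ : ¬ ComplexEmbedding.IsReal φ) :
    cc n (InfinitePlace.mk φ) = n φ + n (ComplexEmbedding.conjugate φ) := by
  have hne : φ ≠ ComplexEmbedding.conjugate φ := by
    intro hh
    exact hφ (ComplexEmbedding.isReal_iff.mpr hh.symm)
  rw [cc, fiber_eq_of_not_isReal hφ, Finset.sum_pair hne]

lemma mult_mk_of_isReal {φ : F →+* ℂ} (hφ : ComplexEmbedding.IsReal φ) :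
    mult (InfinitePlace.mk φ) = 1 := by
  rw [mult, if_pos (isReal_mk_iff.mpr hφ)]

lemma mult_mk_of_not_isReal {φ : F →+* ℂ} (hφ : ¬ ComplexEmbedding.IsReal φ) :
    mult (InfinitePlace.mk φ) = 2 := by
  rw [mult, if_neg (fun hr => hφ (isReal_mk_iff.mp hr))]

lemma val_ne_zero (u : (𝓞 F)ˣ) : algebraMap (𝓞 F) F u ≠ 0 := by
  rw [← RingOfIntegers.coe_eq_algebraMap]
  exact NumberField.Units.coe_ne_zero u

section Analytic

open NumberField.Units NumberField.Units.dirichletUnitTheorem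

lemma sum_log_eq_zero (n : (F →+* ℂ) → ℤ) (U : Subgroup (𝓞 F)ˣ) (hU : U.index ≠ 0)
    (h : ∀ u ∈ U, ∏ τ : F →+* ℂ, (τ (algebraMap (𝓞 F) F u)) ^ (n τ) = 1)
    (u : (𝓞 F)ˣ) :
    ∑ τ : F →+* ℂ, (n τ : ℝ) * Real.log ‖τ (algebraMap (𝓞 F) F u)‖ = 0 := by
  have hmem : u ^ U.index ∈ U := Subgroup.pow_index_mem U u
  have h1 := h _ hmem
  have hval : ∀ τ : F →+* ℂ,
      τ (algebraMap (𝓞 F) F ↑(u ^ U.index)) = τ (algebraMap (𝓞 F) F u) ^ U.index := by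
    intro τ
    rw [Units.val_pow_eq_pow_val, map_pow, map_pow]
  simp_rw [hval] at h1
  have hne : ∀ τ : F →+* ℂ, τ (algebraMap (𝓞 F) F u) ≠ 0 := fun τ =>
    (map_ne_zero τ).mpr (val_ne_zero u)
  have habs := congrArg norm h1
  rw [norm_prod, norm_one] at habs
  have hlog := congrArg Real.log habs
  rw [Real.log_prod (fun τ _ =>
        norm_ne_zero_iff.mpr (zpow_ne_zero _ (pow_ne_zero _ (hne τ)))), Real.log_one] at hlog
  simp only [norm_zpow, norm_pow, Real.log_zpow, Real.log_pow] at hlog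
  have h3 : (U.index : ℝ) *
      ∑ τ : F →+* ℂ, (n τ : ℝ) * Real.log ‖τ (algebraMap (𝓞 F) F u)‖ = 0 := by
    rw [Finset.mul_sum, ← hlog]
    exact Finset.sum_congr rfl fun τ _ => by ring
  exact (mul_eq_zero.mp h3).resolve_left (Nat.cast_ne_zero.mpr hU)

lemma sum_place_log_eq_zero (n : (F →+* ℂ) → ℤ) (U : Subgroup (𝓞 F)ˣ) (hU : U.index ≠ 0)
    (h : ∀ u ∈ U, ∏ τ : F →+* ℂ, (τ (algebraMap (𝓞 F) F u)) ^ (n τ) = 1)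
    (u : (𝓞 F)ˣ) :
    ∑ w : InfinitePlace F, (cc n w : ℝ) * Real.log (w (algebraMap (𝓞 F) F u)) = 0 := by
  calc ∑ w : InfinitePlace F, (cc n w : ℝ) * Real.log (w (algebraMap (𝓞 F) F u))
      = ∑ w : InfinitePlace F, ∑ φ ∈ Finset.univ.filter
          (fun φ : F →+* ℂ => InfinitePlace.mk φ = w),
          (n φ : ℝ) * Real.log ‖φ (algebraMap (𝓞 F) F u)‖ := by
        refine Finset.sum_congr rfl fun w _ => ?_
        rw [cc, Int.cast_sum, Finset.sum_mul]
        refine Finset.sum_congr rfl fun φ hφ => ?_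
        rw [← (Finset.mem_filter.mp hφ).2, InfinitePlace.apply]
    _ = ∑ φ : F →+* ℂ, (n φ : ℝ) * Real.log ‖φ (algebraMap (𝓞 F) F u)‖ :=
        Finset.sum_fiberwise _ _ _
    _ = 0 := sum_log_eq_zero n U hU h u

lemma sum_mult_log_eq_zero (u : (𝓞 F)ˣ) :
    ∑ w : InfinitePlace F, (mult w : ℝ) * Real.log (w (algebraMap (𝓞 F) F u)) = 0 := by
  show ∑ w : InfinitePlace F, (mult w : ℝ) * Real.log (w ((u : 𝓞 F) : F)) = 0
  have h := congrArg Real.log (prod_eq_abs_norm ((u : 𝓞 F) : F))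
  rw [Units.norm, Rat.cast_one, Real.log_one, Real.log_prod] at h
  · simpa [Real.log_pow] using h
  · exact fun w _ => pow_ne_zero _ (AbsoluteValue.ne_zero _ (NumberField.Units.coe_ne_zero u))

/-- The key proportionality: for each place, `d * c_w = S * mult w`. -/
lemma key (n : (F →+* ℂ) → ℤ) (U : Subgroup (𝓞 F)ˣ) (hU : U.index ≠ 0)
    (h : ∀ u ∈ U, ∏ τ : F →+* ℂ, (τ (algebraMap (𝓞 F) F u)) ^ (n τ) = 1)
    (w : InfinitePlace F) :
    (Module.finrank ℚ F : ℤ) * cc n w = (∑ τ : F →+* ℂ, n τ) * (mult w : ℤ) := by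
  set w₀ : InfinitePlace F := dirichletUnitTheorem.w₀ with hw₀
  set e : InfinitePlace F → ℝ :=
    fun w => (cc n w : ℝ) / (mult w : ℝ) - (cc n w₀ : ℝ) / (mult w₀ : ℝ) with he
  have hmne : ∀ w : InfinitePlace F, (mult w : ℝ) ≠ 0 :=
    fun w => Nat.cast_ne_zero.mpr mult_ne_zero
  have hzero : e w₀ = 0 := by simp [he]
  have hz : ∀ u : (𝓞 F)ˣ, ∑ w : {w : InfinitePlace F // w ≠ w₀},
      e w.1 * ((mult w.1 : ℝ) * Real.log (w.1 (algebraMap (𝓞 F) F u))) = 0 := by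
    intro u
    have hfull : ∑ w : InfinitePlace F,
        e w * ((mult w : ℝ) * Real.log (w (algebraMap (𝓞 F) F u))) = 0 := by
      have h1 := sum_place_log_eq_zero n U hU h u
      have h2 := sum_mult_log_eq_zero (F := F) u
      have hterm : ∀ w : InfinitePlace F,
          e w * ((mult w : ℝ) * Real.log (w (algebraMap (𝓞 F) F u))) =
          (cc n w : ℝ) * Real.log (w (algebraMap (𝓞 F) F u)) -
            ((cc n w₀ : ℝ) / (mult w₀ : ℝ)) *
              ((mult w : ℝ) * Real.log (w (algebraMap (𝓞 F) F u))) := by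
        intro w
        rw [he]
        field_simp
      rw [Finset.sum_congr rfl fun w _ => hterm w, Finset.sum_sub_distrib, h1,
        ← Finset.mul_sum, h2, mul_zero, sub_zero]
    have hsub : ∑ w : {w : InfinitePlace F // w ≠ w₀},
        e w.1 * ((mult w.1 : ℝ) * Real.log (w.1 (algebraMap (𝓞 F) F u))) =
        ∑ w ∈ Finset.univ.erase w₀,
          e w * ((mult w : ℝ) * Real.log (w (algebraMap (𝓞 F) F u))) := by
      refine (Finset.sum_subtype (Finset.univ.erase w₀) (fun w => ?_)
        (fun w : InfinitePlace F =>
          e w * ((mult w : ℝ) * Real.log (w (algebraMap (𝓞 F) F u))))).symm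
      exact ⟨Finset.ne_of_mem_erase, fun hw => Finset.mem_erase_of_ne_of_mem hw (Finset.mem_univ w)⟩
    rw [hsub, Finset.sum_erase_eq_sub (Finset.mem_univ w₀), hfull, hzero]
    simp
  -- the linear functional vanishing on the unit lattice
  let L : ({w : InfinitePlace F // w ≠ w₀} → ℝ) →ₗ[ℝ] ℝ :=
    { toFun := fun x => ∑ w, e w.1 * x w
      map_add' := fun x y => by
        simp [mul_add, Finset.sum_add_distrib]
      map_smul' := fun c x => by
        simp [Finset.mul_sum, mul_left_comm] }
  have hL : ∀ x, L x = 0 := by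
    have hle : Submodule.span ℝ ((unitLattice F : Submodule ℤ _) : Set _) ≤ LinearMap.ker L := by
      rw [Submodule.span_le]
      rintro x hx
      obtain ⟨a, -, rfl⟩ := hx
      refine LinearMap.mem_ker.mpr ?_
      have := hz a.toMul
      exact this
    rw [unitLattice_span_eq_top] at hle
    intro x
    exact LinearMap.mem_ker.mp (hle Submodule.mem_top)
  have he0 : ∀ w : InfinitePlace F, e w = 0 := by
    intro w
    by_cases hw : w = w₀
    · rw [hw]; exact hzero
    · have := hL (Pi.single ⟨w, hw⟩ 1)
      simpa [L, Pi.single_apply, Finset.sum_ite_eq', mul_comm] using this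
  have hcrossZ : ∀ w : InfinitePlace F,
      cc n w * (mult w₀ : ℤ) = cc n w₀ * (mult w : ℤ) := by
    intro w
    have h0 := he0 w
    rw [he, sub_eq_zero] at h0
    have := (div_eq_div_iff (hmne w) (hmne w₀)).mp h0
    exact_mod_cast this
  have hsum : (∑ τ : F →+* ℂ, n τ) * (mult w₀ : ℤ) =
      cc n w₀ * (Module.finrank ℚ F : ℤ) := by
    calc (∑ τ : F →+* ℂ, n τ) * (mult w₀ : ℤ)
        = ∑ w' : InfinitePlace F, cc n w' * (mult w₀ : ℤ) := by
          rw [← sum_cc n, Finset.sum_mul]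
      _ = ∑ w' : InfinitePlace F, cc n w₀ * (mult w' : ℤ) :=
          Finset.sum_congr rfl fun w' _ => hcrossZ w'
      _ = cc n w₀ * (Module.finrank ℚ F : ℤ) := by
          rw [← Finset.mul_sum]
          congr 1
          exact_mod_cast congrArg (fun k : ℕ => (k : ℤ)) (sum_mult_eq (K := F))
  have hm₀ : (mult w₀ : ℤ) ≠ 0 := by exact_mod_cast (mult_ne_zero (w := w₀))
  apply mul_right_cancel₀ hm₀
  calc (Module.finrank ℚ F : ℤ) * cc n w * (mult w₀ : ℤ)
      = (cc n w * (mult w₀ : ℤ)) * (Module.finrank ℚ F : ℤ) := by ring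
    _ = (cc n w₀ * (mult w : ℤ)) * (Module.finrank ℚ F : ℤ) := by rw [hcrossZ w]
    _ = (cc n w₀ * (Module.finrank ℚ F : ℤ)) * (mult w : ℤ) := by ring
    _ = ((∑ τ : F →+* ℂ, n τ) * (mult w₀ : ℤ)) * (mult w : ℤ) := by rw [← hsum]
    _ = (∑ τ : F →+* ℂ, n τ) * (mult w : ℤ) * (mult w₀ : ℤ) := by ring

end Analytic

section Twist

variable {A : Type*} [Field A]

/-- Twisting the exponents by "conjugation" by an injective field map preserves the
product-one hypothesis. -/
lemma twist (n : (F →+* ℂ) → ℤ) (U : Subgroup (𝓞 F)ˣ)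
    (h : ∀ u ∈ U, ∏ τ : F →+* ℂ, (τ (algebraMap (𝓞 F) F u)) ^ (n τ) = 1)
    (j : A →+* ℂ) (γ : A →+* A)
    (r : (F →+* ℂ) → (F →+* A)) (hr : ∀ φ, j.comp (r φ) = φ) :
    ∀ u ∈ U, ∏ τ : F →+* ℂ,
      (τ (algebraMap (𝓞 F) F u)) ^ (n (j.comp (γ.comp (r τ)))) = 1 := by
  intro u hu
  set x := algebraMap (𝓞 F) F (u : 𝓞 F) with hx
  set e : (F →+* ℂ) → (F →+* ℂ) := fun φ => j.comp (γ.comp (r φ)) with hedef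
  have hkey : ∀ (φ : F →+* ℂ) (y : F), φ y = j (r φ y) := by
    intro φ y
    conv_lhs => rw [← hr φ]
    rfl
  have hinj : Function.Injective e := by
    intro φ φ' hh
    have h1 : ∀ y, r φ y = r φ' y := fun y =>
      γ.injective (j.injective (RingHom.congr_fun hh y))
    ext y
    rw [hkey φ y, hkey φ' y, h1 y]
  have hbij : Function.Bijective e := Finite.injective_iff_bijective.mp hinj
  have hre : ∀ φ : F →+* ℂ, r (e φ) = γ.comp (r φ) := by
    intro φ
    ext y
    apply j.injective
    have := hkey (e φ) y
    rw [← this]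
    rfl
  have hQ : ∏ σ : F →+* ℂ, (r σ x) ^ (n σ) = 1 := by
    apply j.injective
    rw [map_prod, map_one]
    calc ∏ σ : F →+* ℂ, j ((r σ x) ^ (n σ))
        = ∏ σ : F →+* ℂ, (σ x) ^ (n σ) := by
          refine Finset.prod_congr rfl fun σ _ => ?_
          rw [map_zpow₀, ← hkey σ x]
      _ = 1 := h u hu
  have hP : ∏ τ : F →+* ℂ, (r τ x) ^ (n (e τ)) = 1 := by
    apply γ.injective
    rw [map_prod, map_one]
    calc ∏ τ : F →+* ℂ, γ ((r τ x) ^ (n (e τ)))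
        = ∏ τ : F →+* ℂ, (r (e τ) x) ^ (n (e τ)) := by
          refine Finset.prod_congr rfl fun τ _ => ?_
          rw [map_zpow₀]
          congr 1
          rw [hre τ]
          rfl
      _ = ∏ σ : F →+* ℂ, (r σ x) ^ (n σ) :=
          Fintype.prod_bijective e hbij _ _ (fun τ => rfl)
      _ = 1 := hQ
  calc ∏ τ : F →+* ℂ, (τ x) ^ (n (e τ))
      = ∏ τ : F →+* ℂ, j ((r τ x) ^ (n (e τ))) := by
        refine Finset.prod_congr rfl fun τ _ => ?_
        rw [map_zpow₀, ← hkey τ x]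
    _ = j (∏ τ : F →+* ℂ, (r τ x) ^ (n (e τ))) := (map_prod j _ _).symm
    _ = 1 := by rw [hP, map_one]

lemma sum_twist (n : (F →+* ℂ) → ℤ) (j : A →+* ℂ) (γ : A →+* A)
    (r : (F →+* ℂ) → (F →+* A)) (hr : ∀ φ, j.comp (r φ) = φ) :
    ∑ τ : F →+* ℂ, n (j.comp (γ.comp (r τ))) = ∑ τ : F →+* ℂ, n τ := by
  set e : (F →+* ℂ) → (F →+* ℂ) := fun φ => j.comp (γ.comp (r φ)) with hedef
  have hkey : ∀ (φ : F →+* ℂ) (y : F), φ y = j (r φ y) := by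
    intro φ y
    conv_lhs => rw [← hr φ]
    rfl
  have hinj : Function.Injective e := by
    intro φ φ' hh
    have h1 : ∀ y, r φ y = r φ' y := fun y =>
      γ.injective (j.injective (RingHom.congr_fun hh y))
    ext y
    rw [hkey φ y, hkey φ' y, h1 y]
  exact Fintype.sum_bijective e (Finite.injective_iff_bijective.mp hinj) _ _ (fun τ => rfl)

end Twist

section Extend

/-- Any two embeddings of a number field into an algebraically closed algebraic
extension of `ℚ` are related by an endomorphism of the latter. -/
lemma exists_comp (K : Type*) [Field K] [Algebra ℚ K] [IsAlgClosed K]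
    [Algebra.IsAlgebraic ℚ K] (σ τ : F →+* K) :
    ∃ γ : K →+* K, γ.comp σ = τ := by
  letI : Algebra F K := σ.toAlgebra
  haveI : IsScalarTower ℚ F K :=
    IsScalarTower.of_algebraMap_eq' (Subsingleton.elim _ _)
  haveI : Algebra.IsAlgebraic F K := Algebra.IsAlgebraic.tower_top (K := ℚ) F
  obtain ⟨φ, hφ⟩ := IsAlgClosed.surjective_restrictDomain_of_isAlgebraic
    (K := ℚ) (L := F) (E := K) (M := K) τ.toRatAlgHom
  refine ⟨φ.toRingHom, RingHom.ext fun y => ?_⟩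
  exact AlgHom.congr_fun hφ y

end Extend

end PurityAux

open PurityAux NumberField.InfinitePlace in
/-- Purity lemma: if integers `(n_τ)_{τ : F →+* ℂ}` satisfy
`∏_τ τ(u)^{n_τ} = 1` for all `u` in a finite-index subgroup `U` of the unit
group of `𝓞 F`, then there is `w ∈ ℤ` such that (i) if `F` has a real
embedding then `n_τ = w` for all `τ`, and (ii) if `F` has no real embedding
then `n_{γ∘τ} + n_{γ∘τ̄} = w` for all `τ` and all `γ ∈ Gal(ℚ̄/ℚ)`. -/
theorem purity_lemma (F : Type*) [Field F] [NumberField F]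
    (n : (F →+* ℂ) → ℤ) (U : Subgroup (𝓞 F)ˣ) (hU : U.index ≠ 0)
    (h : ∀ u ∈ U, ∏ τ : F →+* ℂ, (τ (algebraMap (𝓞 F) F u)) ^ (n τ) = 1) :
    ∃ w : ℤ,
      (Nonempty (F →+* ℝ) → ∀ τ : F →+* ℂ, n τ = w) ∧
      (IsEmpty (F →+* ℝ) → ∀ (τ : F →+* ℂ) (γ : ℂ →+* ℂ),
        n (γ.comp τ) + n (γ.comp ((starRingEnd ℂ).comp τ)) = w) := by
  classical
  have hd : (Module.finrank ℚ F : ℤ) ≠ 0 := by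
    have : 0 < Module.finrank ℚ F := Module.finrank_pos
    exact_mod_cast this.ne'
  set S : ℤ := ∑ τ : F →+* ℂ, n τ with hS
  by_cases hre : Nonempty (F →+* ℝ)
  · -- Case (i): there is a real embedding.
    obtain ⟨ρ⟩ := hre
    set σ₀ : F →+* ℂ := Complex.ofRealHom.comp ρ with hσ₀
    have hσ₀real : ComplexEmbedding.IsReal σ₀ := by
      rw [ComplexEmbedding.isReal_iff]
      ext y
      simp [hσ₀, ComplexEmbedding.conjugate_coe_eq, Complex.conj_ofReal]
    refine ⟨n σ₀, fun _ => ?_, fun hiso => (hiso.false ρ).elim⟩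
    intro τ
    -- set up the algebraic closure of ℚ inside ℂ
    set K : IntermediateField ℚ ℂ := algebraicClosure ℚ ℂ with hK
    haveI : IsAlgClosed K := (algebraicClosure.isAlgClosure ℚ ℂ).isAlgClosed
    have hmem : ∀ (φ : F →+* ℂ) (y : F), φ y ∈ K := by
      intro φ y
      rw [hK, mem_algebraicClosure_iff]
      exact (Algebra.IsAlgebraic.isAlgebraic (R := ℚ) y).algHom φ.toRatAlgHom
    set r : (F →+* ℂ) → (F →+* K) := fun φ => φ.codRestrict K
      (fun y => hmem φ y) with hrdef
    set j : (K : Type _) →+* ℂ := (IntermediateField.val K).toRingHom with hjdef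
    have hr : ∀ φ : F →+* ℂ, j.comp (r φ) = φ := by
      intro φ; ext y; rfl
    haveI : Algebra.IsAlgebraic ℚ K := algebraicClosure.isAlgebraic ℚ ℂ
    obtain ⟨γ, hγ⟩ := exists_comp (K := K) (r σ₀) (r τ)
    have htwist := twist n U h j γ r hr
    set m : (F →+* ℂ) → ℤ := fun φ => n (j.comp (γ.comp (r φ))) with hm
    have hm0 : m σ₀ = n τ := by
      rw [hm]
      simp only
      rw [hγ, hr τ]
    have hkeym := key m U hU htwist (InfinitePlace.mk σ₀)
    have hkeyn := key n U hU h (InfinitePlace.mk σ₀)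
    have hsm : ∑ τ' : F →+* ℂ, m τ' = S := sum_twist n j γ r hr
    rw [cc_of_isReal m hσ₀real, mult_mk_of_isReal hσ₀real, hsm, hm0] at hkeym
    rw [cc_of_isReal n hσ₀real, mult_mk_of_isReal hσ₀real, ← hS] at hkeyn
    exact mul_left_cancel₀ hd (hkeym.trans hkeyn.symm)
  · -- Case (ii): totally imaginary.
    haveI hie : IsEmpty (F →+* ℝ) := not_nonempty_iff.mp hre
    have hnotreal : ∀ φ : F →+* ℂ, ¬ ComplexEmbedding.IsReal φ := by
      intro φ hφ
      exact hie.false (ComplexEmbedding.IsReal.embedding hφ)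
    obtain ⟨τ₀⟩ : Nonempty (F →+* ℂ) := inferInstance
    refine ⟨n τ₀ + n (ComplexEmbedding.conjugate τ₀), fun hne => (hre hne).elim, ?_⟩
    intro _ τ γ
    -- the twisted exponents
    have hid : ∀ φ : F →+* ℂ, (RingHom.id ℂ).comp φ = φ := fun φ => RingHom.id_comp φ
    have htwist := twist n U h (RingHom.id ℂ) γ (fun φ => φ) hid
    set m : (F →+* ℂ) → ℤ := fun φ => n ((RingHom.id ℂ).comp (γ.comp φ)) with hm
    have hm' : ∀ φ : F →+* ℂ, m φ = n (γ.comp φ) := by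
      intro φ; rw [hm]; simp
    have hkeym := key m U hU htwist
    have hkeyn := key n U hU h
    have hsm : ∑ τ' : F →+* ℂ, m τ' = S :=
      sum_twist n (RingHom.id ℂ) γ (fun φ => φ) hid
    have h1 := hkeym (InfinitePlace.mk τ)
    have h2 := hkeyn (InfinitePlace.mk τ₀)
    rw [cc_of_not_isReal m (hnotreal τ), mult_mk_of_not_isReal (hnotreal τ), hsm] at h1
    rw [cc_of_not_isReal n (hnotreal τ₀), mult_mk_of_not_isReal (hnotreal τ₀), ← hS] at h2
    have hconj : ComplexEmbedding.conjugate τ = (starRingEnd ℂ).comp τ := rfl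
    have : (Module.finrank ℚ F : ℤ) *
        (n (γ.comp τ) + n (γ.comp ((starRingEnd ℂ).comp τ))) =
        (Module.finrank ℚ F : ℤ) * (n τ₀ + n (ComplexEmbedding.conjugate τ₀)) := by
      rw [← hm' τ, ← hconj, ← hm' (ComplexEmbedding.conjugate τ), h1, h2]
    exact mul_left_cancel₀ hd this
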